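/- Let n ≥ 1, a < c, and let Y : ℝ → Matrix (Fin n) (Fin n) ℝ be continuous on [a, c]. Then the matrix G = ∫_a^c Y(t)ᵀ·Y(t) dt is positive semidefinite; and if moreover Y(x₀) is invertible for some x₀ ∈ [a, c], then G is positive definite, i.e. v ⬝ᵥ G.mulVec v > 0 for every nonzero v ∈ ℝⁿ. (This is the positive definiteness of the Gram-type integral ∫ Yᵀ Y dt appearing in the energy derivative ∂Ψ_L/∂E = (Y_L'ᵀ)⁻¹ (∫_a^c Y_Lᵀ Y_L dt) (Y_L')⁻¹ of the left R-matrix.) -/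

import Mathlib

attribute [local instance] Matrix.normedAddCommGroup Matrix.normedSpace

open scoped Matrix

open MeasureTheory intervalIntegral Set

section aux

variable {n : ℕ}

/-- The quadratic form `M ↦ v ⬝ᵥ M.mulVec v` as a continuous linear map. -/
noncomputable def quadCLM (n : ℕ) (v : Fin n → ℝ) :
    Matrix (Fin n) (Fin n) ℝ →L[ℝ] ℝ :=
  LinearMap.toContinuousLinearMap
    { toFun := fun M => v ⬝ᵥ M.mulVec v
      map_add' := by
        intro M N
        simp [Matrix.add_mulVec, dotProduct_add]
      map_smul' := by
        intro r M
        simp [Matrix.smul_mulVec, dotProduct_smul] }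

@[simp] lemma quadCLM_apply (v : Fin n → ℝ) (M : Matrix (Fin n) (Fin n) ℝ) :
    quadCLM n v M = v ⬝ᵥ M.mulVec v := rfl

/-- The entry map as a continuous linear map. -/
noncomputable def entryCLM (n : ℕ) (i j : Fin n) :
    Matrix (Fin n) (Fin n) ℝ →L[ℝ] ℝ :=
  LinearMap.toContinuousLinearMap
    { toFun := fun M => M i j
      map_add' := by intro M N; rfl
      map_smul' := by intro r M; rfl }

@[simp] lemma entryCLM_apply (i j : Fin n) (M : Matrix (Fin n) (Fin n) ℝ) :
    entryCLM n i j M = M i j := rfl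

lemma quad_eq (v : Fin n → ℝ) (A : Matrix (Fin n) (Fin n) ℝ) :
    v ⬝ᵥ (Aᵀ * A).mulVec v = (A.mulVec v) ⬝ᵥ (A.mulVec v) := by
  rw [← Matrix.mulVec_mulVec, Matrix.dotProduct_mulVec, Matrix.vecMul_transpose]

lemma dot_self_nonneg (w : Fin n → ℝ) : 0 ≤ w ⬝ᵥ w :=
  Finset.sum_nonneg fun i _ => mul_self_nonneg (w i)

end aux

/-- The Gram-type integral `G = ∫_a^c Y(t)ᵀ·Y(t) dt` of a continuous
matrix-valued function is positive semidefinite, and positive definite if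
`Y(x₀)` is invertible for some `x₀ ∈ [a,c]`. -/
theorem gram_integral_posdef (n : ℕ) (hn : 1 ≤ n) (a c : ℝ) (hac : a < c)
    (Y : ℝ → Matrix (Fin n) (Fin n) ℝ)
    (hY : ContinuousOn Y (Set.Icc a c)) :
    (∫ t in a..c, (Y t)ᵀ * Y t).PosSemidef ∧
    ((∃ x₀ ∈ Set.Icc a c, IsUnit (Y x₀)) →
      ∀ v : Fin n → ℝ, v ≠ 0 →
        0 < v ⬝ᵥ (∫ t in a..c, (Y t)ᵀ * Y t).mulVec v) := by
  have hab : a ≤ c := hac.le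
  -- continuity of the integrand
  have hYT : ContinuousOn (fun t => (Y t)ᵀ) (Set.Icc a c) := by
    apply continuousOn_pi.2
    intro i
    apply continuousOn_pi.2
    intro j
    exact (continuous_apply_apply j i).comp_continuousOn hY
  have hcont : ContinuousOn (fun t => (Y t)ᵀ * Y t) (Set.Icc a c) := hYT.mul hY
  have hint : @IntervalIntegrable _ PseudoMetricSpace.toUniformSpace.toTopologicalSpace
      NormedAddGroup.toENormedAddMonoid (fun t => (Y t)ᵀ * Y t) volume a c := by
    apply ContinuousOn.intervalIntegrable
    rwa [Set.uIcc_of_le hab]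
  -- quadratic form of the integral equals the integral of quadratic forms
  have hquad : ∀ v : Fin n → ℝ,
      v ⬝ᵥ (∫ t in a..c, (Y t)ᵀ * Y t).mulVec v
        = ∫ t in a..c, ((Y t).mulVec v) ⬝ᵥ ((Y t).mulVec v) := by
    intro v
    have := (quadCLM n v).intervalIntegral_comp_comm hint
    rw [← quadCLM_apply]
    refine this.symm.trans ?_
    refine intervalIntegral.integral_congr fun t _ => ?_
    exact quad_eq v (Y t)
  constructor
  · -- positive semidefiniteness
    refine Matrix.posSemidef_iff_dotProduct_mulVec.mpr ⟨?_, ?_⟩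
    · -- Hermitian
      rw [Matrix.IsHermitian, Matrix.conjTranspose_eq_transpose_of_trivial]
      ext i j
      rw [Matrix.transpose_apply]
      have hi : ∫ t in a..c, ((Y t)ᵀ * Y t) i j = (∫ t in a..c, (Y t)ᵀ * Y t) i j :=
        (entryCLM n i j).intervalIntegral_comp_comm hint
      have hj : ∫ t in a..c, ((Y t)ᵀ * Y t) j i = (∫ t in a..c, (Y t)ᵀ * Y t) j i :=
        (entryCLM n j i).intervalIntegral_comp_comm hint
      rw [← hi, ← hj]
      refine intervalIntegral.integral_congr fun t _ => ?_
      simp [Matrix.mul_apply, mul_comm]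
    · intro v
      have hsv : star v = v := rfl
      rw [hsv, hquad v]
      apply intervalIntegral.integral_nonneg hab
      intro t _
      exact dot_self_nonneg _
  · -- positive definiteness
    rintro ⟨x₀, hx₀, hu⟩ v hv
    rw [hquad v]
    set f : ℝ → ℝ := fun t => ((Y t).mulVec v) ⬝ᵥ ((Y t).mulVec v) with hf
    have hfc : ContinuousOn f (Set.Icc a c) := by
      have : f = fun t => quadCLM n v ((Y t)ᵀ * Y t) :=
        funext fun t => by simp [hf, quad_eq]
      rw [this]
      exact (quadCLM n v).continuous.comp_continuousOn hcont
    have hfint : IntervalIntegrable f volume a c := by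
      apply ContinuousOn.intervalIntegrable
      rwa [Set.uIcc_of_le hab]
    have hfnn : ∀ t, 0 ≤ f t := fun t => dot_self_nonneg _
    -- f x₀ > 0
    have hmv : (Y x₀).mulVec v ≠ 0 := by
      intro h0
      apply hv
      have hdet := (Matrix.isUnit_iff_isUnit_det _).mp hu
      have : ((Y x₀)⁻¹ * Y x₀).mulVec v = 0 := by
        rw [← Matrix.mulVec_mulVec, h0, Matrix.mulVec_zero]
      rwa [Matrix.nonsing_inv_mul _ hdet, Matrix.one_mulVec] at this
    have hfx₀ : 0 < f x₀ := by
      rcases lt_or_eq_of_le (hfnn x₀) with h | h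
      · exact h
      · exact absurd (dotProduct_self_eq_zero.mp h.symm) hmv
    -- find a neighborhood of x₀ in [a,c] where f > 0
    have hev : ∀ᶠ x in nhdsWithin x₀ (Set.Icc a c), 0 < f x :=
      (hfc x₀ hx₀).eventually (isOpen_Ioi.eventually_mem hfx₀)
    rw [nhdsWithin, Filter.eventually_inf_principal] at hev
    obtain ⟨ε, hε, hball⟩ := Metric.eventually_nhds_iff_ball.mp hev
    -- the interval (max a (x₀-ε), min c (x₀+ε)) is inside the support of f
    set u := max a (x₀ - ε)
    set w := min c (x₀ + ε)
    have huw : u < w := by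
      rcases hx₀ with ⟨h1, h2⟩
      apply max_lt <;> apply lt_min
      · exact hac
      · linarith
      · linarith
      · linarith
    have hsub : Set.Ioo u w ⊆ Function.support f ∩ Set.Ioc a c := by
      intro x hx
      have hxa : a < x := lt_of_le_of_lt (le_max_left _ _) hx.1
      have hxc : x ≤ c := le_of_lt (lt_of_lt_of_le hx.2 (min_le_left _ _))
      have hxb : x ∈ Metric.ball x₀ ε := by
        rw [Metric.mem_ball, Real.dist_eq, abs_lt]
        constructor
        · have := lt_of_le_of_lt (le_max_right _ _) hx.1; linarith
        · have := lt_of_lt_of_le hx.2 (min_le_right _ _); linarith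
      have hxI : x ∈ Set.Icc a c := ⟨hxa.le, hxc⟩
      exact ⟨(hball x hxb hxI).ne', hxa, hxc⟩
    rw [intervalIntegral.integral_pos_iff_support_of_nonneg_ae
      (Filter.Eventually.of_forall hfnn) hfint]
    refine ⟨hac, lt_of_lt_of_le ?_ (measure_mono hsub)⟩
    rw [Real.volume_Ioo]
    exact ENNReal.ofReal_pos.mpr (by linarith)
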